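/- arXiv:2506.22480 — 4 statements merged into one kernel-verified Lean document; each statement's English description precedes it below -/
import Mathlib

section
/- Let x_1, …, x_K ∈ ℝ^d, let T_1, …, T_K ≥ 0 and λ > 0 be real numbers, and set A = λ·I_d + Σ_{k=1}^{K} T_k · x_k x_kᵀ (which is positive definite). Let w_1, …, w_K ∈ ℝ satisfy w_k = 0 whenever T_k = 0, and set y = Σ_{k=1}^{K} w_k x_k. Then yᵀ A⁻¹ y ≤ Σ_{k : T_k > 0} w_k² / T_k. -/
open Matrix Finset

private lemma sum_mulVec' {n m : Type*} [Fintype m] [Fintype n] {ι : Type*} (s : Finset ι)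
    (M : ι → Matrix n m ℝ) (v : m → ℝ) :
    (∑ k ∈ s, M k) *ᵥ v = ∑ k ∈ s, (M k) *ᵥ v := by
  ext i
  simp [Matrix.mulVec, dotProduct, Matrix.sum_apply, Finset.sum_mul]
  rw [Finset.sum_comm]

private lemma vecMulVec_mulVec' {n : Type*} [Fintype n] (u v z : n → ℝ) :
    (vecMulVec u v) *ᵥ z = (v ⬝ᵥ z) • u := by
  ext i
  simp [Matrix.mulVec, dotProduct, vecMulVec_apply, Finset.mul_sum, mul_comm,
    mul_left_comm]


private lemma dotProduct_sum' {n : Type*} [Fintype n] {ι : Type*} (s : Finset ι)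
    (v : n → ℝ) (f : ι → (n → ℝ)) :
    v ⬝ᵥ (∑ k ∈ s, f k) = ∑ k ∈ s, v ⬝ᵥ f k := by
  simp only [dotProduct, Finset.sum_apply, Finset.mul_sum]
  rw [Finset.sum_comm]

private lemma sum_dotProduct' {n : Type*} [Fintype n] {ι : Type*} (s : Finset ι)
    (v : n → ℝ) (f : ι → (n → ℝ)) :
    (∑ k ∈ s, f k) ⬝ᵥ v = ∑ k ∈ s, f k ⬝ᵥ v := by
  simp only [dotProduct, Finset.sum_apply, Finset.sum_mul]
  rw [Finset.sum_comm]

/-- If `A = λ I + Σ_k T_k x_k x_kᵀ`, `y = Σ_k w_k x_k` with `w_k = 0` whenever `T_k = 0`,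
then `yᵀ A⁻¹ y ≤ Σ_{k : T_k > 0} w_k² / T_k`. -/
theorem inv_quadratic_form_allocation_bound (d K : ℕ)
    (x : Fin K → (Fin d → ℝ)) (T : Fin K → ℝ) (lam : ℝ)
    (hT : ∀ k, 0 ≤ T k) (hlam : 0 < lam)
    (w : Fin K → ℝ) (hw : ∀ k, T k = 0 → w k = 0)
    (A : Matrix (Fin d) (Fin d) ℝ)
    (hA : A = lam • (1 : Matrix (Fin d) (Fin d) ℝ) + ∑ k, T k • vecMulVec (x k) (x k))
    (y : Fin d → ℝ) (hy : y = ∑ k, w k • x k) :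
    y ⬝ᵥ (A⁻¹ *ᵥ y) ≤ ∑ k ∈ Finset.univ.filter (fun k => 0 < T k), (w k) ^ 2 / T k := by
  classical
  -- quadratic form of A
  have hmv : ∀ v, A *ᵥ v = lam • v + ∑ k, (T k * (x k ⬝ᵥ v)) • x k := by
    intro v
    rw [hA, Matrix.add_mulVec, Matrix.smul_mulVec, Matrix.one_mulVec, sum_mulVec']
    congr 1
    refine Finset.sum_congr rfl fun k _ => ?_
    rw [Matrix.smul_mulVec, vecMulVec_mulVec', smul_smul]
  have hquad : ∀ v, v ⬝ᵥ (A *ᵥ v) = lam * (v ⬝ᵥ v) + ∑ k, T k * (x k ⬝ᵥ v) ^ 2 := by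
    intro v
    rw [hmv v, dotProduct_add, dotProduct_smul, smul_eq_mul,
      dotProduct_sum' Finset.univ v _]
    congr 1
    refine Finset.sum_congr rfl fun k _ => ?_
    rw [dotProduct_smul, smul_eq_mul, dotProduct_comm]
    ring
  -- A is positive definite
  have hHerm : A.IsHermitian := by
    rw [Matrix.IsHermitian]
    ext i j
    simp [hA, Matrix.conjTranspose_apply, Matrix.add_apply, Matrix.one_apply,
      Matrix.sum_apply, Matrix.vecMulVec_apply, eq_comm, mul_comm, mul_left_comm]
  have hPD : A.PosDef := by
    refine Matrix.posDef_iff_dotProduct_mulVec.mpr ⟨hHerm, fun v hv => ?_⟩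
    rw [star_trivial, hquad v]
    have h1 : 0 < v ⬝ᵥ v := by
      rcases lt_or_eq_of_le (Finset.sum_nonneg fun i _ => mul_self_nonneg (v i)) with h | h
      · exact h
      · exact absurd (dotProduct_self_eq_zero.mp h.symm) hv
    have h2 : 0 ≤ ∑ k, T k * (x k ⬝ᵥ v) ^ 2 :=
      Finset.sum_nonneg fun k _ => mul_nonneg (hT k) (sq_nonneg _)
    positivity
  have hdet : IsUnit A.det := (Matrix.isUnit_iff_isUnit_det A).mp hPD.isUnit
  set z := A⁻¹ *ᵥ y with hzdef
  have hAz : A *ᵥ z = y := by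
    rw [hzdef, Matrix.mulVec_mulVec, Matrix.mul_nonsing_inv _ hdet, Matrix.one_mulVec]
  set q := y ⬝ᵥ z with hq
  set c := ∑ k ∈ Finset.univ.filter (fun k => 0 < T k), (w k) ^ 2 / T k with hc
  have hc0 : 0 ≤ c :=
    Finset.sum_nonneg fun k hk => div_nonneg (sq_nonneg _) (hT k)
  -- q as a sum over the filter
  have hqsum : q = ∑ k ∈ Finset.univ.filter (fun k => 0 < T k), w k * (x k ⬝ᵥ z) := by
    rw [hq, hy, sum_dotProduct' Finset.univ z _]
    rw [Finset.sum_filter_of_ne]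
    · exact Finset.sum_congr rfl fun k _ => by
        rw [smul_dotProduct, smul_eq_mul]
    · intro k _ hne
      rcases (hT k).lt_or_eq with h | h
      · exact h
      · exfalso; apply hne; rw [hw k h.symm, zero_mul]
  -- Cauchy–Schwarz
  have hCS : q ^ 2 ≤ c * ∑ k ∈ Finset.univ.filter (fun k => 0 < T k),
      T k * (x k ⬝ᵥ z) ^ 2 := by
    have := Finset.sum_mul_sq_le_sq_mul_sq (Finset.univ.filter (fun k => 0 < T k))
      (fun k => w k / Real.sqrt (T k)) (fun k => Real.sqrt (T k) * (x k ⬝ᵥ z))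
    have e1 : ∑ k ∈ Finset.univ.filter (fun k => 0 < T k),
        (w k / Real.sqrt (T k)) * (Real.sqrt (T k) * (x k ⬝ᵥ z)) = q := by
      rw [hqsum]
      refine Finset.sum_congr rfl fun k hk => ?_
      have hk' : 0 < T k := (Finset.mem_filter.mp hk).2
      have : Real.sqrt (T k) ≠ 0 := ne_of_gt (Real.sqrt_pos.mpr hk')
      field_simp
    have e2 : ∑ k ∈ Finset.univ.filter (fun k => 0 < T k),
        (w k / Real.sqrt (T k)) ^ 2 = c := by
      rw [hc]
      refine Finset.sum_congr rfl fun k hk => ?_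
      have hk' : 0 < T k := (Finset.mem_filter.mp hk).2
      rw [div_pow, Real.sq_sqrt hk'.le]
    have e3 : ∀ k ∈ Finset.univ.filter (fun k => 0 < T k),
        (Real.sqrt (T k) * (x k ⬝ᵥ z)) ^ 2 = T k * (x k ⬝ᵥ z) ^ 2 := by
      intro k hk
      have hk' : 0 < T k := (Finset.mem_filter.mp hk).2
      rw [mul_pow, Real.sq_sqrt hk'.le]
    rw [e1, e2, Finset.sum_congr rfl e3] at this
    exact this
  -- the filtered sum of T (x⬝z)² is at most q
  have hsumle : ∑ k ∈ Finset.univ.filter (fun k => 0 < T k), T k * (x k ⬝ᵥ z) ^ 2 ≤ q := by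
    have h1 : ∑ k ∈ Finset.univ.filter (fun k => 0 < T k), T k * (x k ⬝ᵥ z) ^ 2
        ≤ ∑ k, T k * (x k ⬝ᵥ z) ^ 2 :=
      Finset.sum_le_sum_of_subset_of_nonneg (Finset.filter_subset _ _)
        fun k _ _ => mul_nonneg (hT k) (sq_nonneg _)
    have h2 : z ⬝ᵥ (A *ᵥ z) = lam * (z ⬝ᵥ z) + ∑ k, T k * (x k ⬝ᵥ z) ^ 2 := hquad z
    have h3 : z ⬝ᵥ (A *ᵥ z) = q := by rw [hAz, dotProduct_comm, hq]
    have h4 : 0 ≤ lam * (z ⬝ᵥ z) :=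
      mul_nonneg hlam.le (Finset.sum_nonneg fun i _ => mul_self_nonneg (z i))
    linarith
  have hkey : q ^ 2 ≤ c * q :=
    hCS.trans (mul_le_mul_of_nonneg_left hsumle hc0)
  rcases le_or_gt q 0 with h | h
  · exact h.trans hc0
  · have : q * q ≤ c * q := by rwa [← sq]
    exact le_of_mul_le_mul_right this h
end

section
/- Let P be a natural number, let n_1, …, n_P and g_1, …, g_P be positive real numbers, and let D, τ, G be positive real numbers such that n_p · g_p > D for every p ∈ {1, …, P}, Σ_{p=1}^{P} n_p ≤ τ, and Σ_{p=1}^{P} g_p ≤ G. Then for every γ > 0, P ≤ τ/γ + γ·G/D; consequently P ≤ 2·√(τ·G/D). -/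
open Finset

/-- Counting lemma for communication epochs: if `n_p · g_p > D` for every epoch,
`Σ n_p ≤ τ` and `Σ g_p ≤ G`, then `P ≤ τ/γ + γG/D` for every `γ > 0`,
and consequently `P ≤ 2√(τG/D)`. -/
theorem epoch_counting_bound (P : ℕ) (n g : Fin P → ℝ) (D τ G : ℝ)
    (hn : ∀ p, 0 < n p) (hg : ∀ p, 0 < g p)
    (hD : 0 < D) (hτ : 0 < τ) (hG : 0 < G)
    (htrig : ∀ p, D < n p * g p)
    (hsum_n : ∑ p, n p ≤ τ) (hsum_g : ∑ p, g p ≤ G) :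
    (∀ γ : ℝ, 0 < γ → (P : ℝ) ≤ τ / γ + γ * G / D) ∧
      (P : ℝ) ≤ 2 * Real.sqrt (τ * G / D) := by
  have key : ∀ γ : ℝ, 0 < γ → (P : ℝ) ≤ τ / γ + γ * G / D := by
    intro γ hγ
    classical
    set S₁ := Finset.univ.filter (fun p => γ ≤ n p) with hS₁
    set S₂ := Finset.univ.filter (fun p => ¬ γ ≤ n p) with hS₂
    have hcard : (S₁.card : ℝ) + S₂.card = P := by
      have := Finset.card_filter_add_card_filter_not
        (s := (Finset.univ : Finset (Fin P))) (p := fun p => γ ≤ n p)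
      have h2 : S₁.card + S₂.card = P := by
        simpa [hS₁, hS₂] using this
      exact_mod_cast h2
    have h1 : (S₁.card : ℝ) ≤ τ / γ := by
      have : (S₁.card : ℝ) * γ ≤ ∑ p ∈ S₁, n p := by
        calc (S₁.card : ℝ) * γ = ∑ _p ∈ S₁, γ := by
              rw [Finset.sum_const, nsmul_eq_mul]
          _ ≤ ∑ p ∈ S₁, n p := Finset.sum_le_sum (fun p hp => (Finset.mem_filter.mp hp).2)
      have hle : ∑ p ∈ S₁, n p ≤ ∑ p, n p :=
        Finset.sum_le_sum_of_subset_of_nonneg (Finset.filter_subset _ _)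
          (fun p _ _ => (hn p).le)
      have := this.trans (hle.trans hsum_n)
      rw [le_div_iff₀ hγ]; linarith
    have h2 : (S₂.card : ℝ) ≤ γ * G / D := by
      have hstep : ∀ p ∈ S₂, D / γ ≤ g p := by
        intro p hp
        have hnp : n p < γ := lt_of_not_ge (Finset.mem_filter.mp hp).2
        have := htrig p
        rw [div_le_iff₀ hγ]
        nlinarith [hg p, hn p]
      have : (S₂.card : ℝ) * (D / γ) ≤ ∑ p ∈ S₂, g p := by
        calc (S₂.card : ℝ) * (D / γ) = ∑ _p ∈ S₂, D / γ := by
              rw [Finset.sum_const, nsmul_eq_mul]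
          _ ≤ ∑ p ∈ S₂, g p := Finset.sum_le_sum hstep
      have hle : ∑ p ∈ S₂, g p ≤ ∑ p, g p :=
        Finset.sum_le_sum_of_subset_of_nonneg (Finset.filter_subset _ _)
          (fun p _ _ => (hg p).le)
      have h := this.trans (hle.trans hsum_g)
      rw [le_div_iff₀ hD]
      have hd : D / γ * γ = D := div_mul_cancel₀ _ hγ.ne'
      nlinarith [mul_le_mul_of_nonneg_right h hγ.le]
    linarith
  refine ⟨key, ?_⟩
  set γ := Real.sqrt (τ * D / G) with hγdef
  have hγ : 0 < γ := Real.sqrt_pos.mpr (by positivity)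
  have := key γ hγ
  have hγ2 : γ^2 = τ * D / G := Real.sq_sqrt (by positivity)
  have e1 : τ / γ = Real.sqrt (τ * G / D) := by
    rw [show τ * G / D = (τ / γ)^2 by rw [div_pow, hγ2]; field_simp,
      Real.sqrt_sq (by positivity)]
  have e2 : γ * G / D = Real.sqrt (τ * G / D) := by
    rw [show τ * G / D = (γ * G / D)^2 by rw [div_pow, mul_pow, hγ2]; field_simp,
      Real.sqrt_sq (by positivity)]
  linarith
end

section
/- Let x_1, …, x_K ∈ ℝ^d with K ≥ 2, and let θ*, θ̂ ∈ ℝ^d. For i, j ∈ {1, …, K}, define the true gap Δ(i,j) = (x_i − x_j)ᵀθ* and the estimated gap Δ̂(i,j) = (x_i − x_j)ᵀθ̂. Let a* ∈ {1, …, K} be a maximizer of a ↦ x_aᵀθ*, and set Δ_i = (x_{a*} − x_i)ᵀθ* for all i. Let β : {1,…,K} × {1,…,K} → ℝ satisfy β(i,j) = β(j,i) ≥ 0 and β(i,i) = 0 for all i, j, and assume the good event holds: |Δ(i,j) − Δ̂(i,j)| ≤ β(i,j) for all i, j. Let i_t be a maximizer of i ↦ x_iᵀθ̂, let j_t be a maximizer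 of j ↦ Δ̂(j, i_t) + β(j, i_t), and set B = Δ̂(j_t, i_t) + β(j_t, i_t). Then: if i_t = a* or j_t = a*, B ≤ min(0, −max(Δ_{i_t}, Δ_{j_t}) + β(i_t, j_t)) + β(i_t, j_t); otherwise, B ≤ min(0, −max(Δ_{i_t}, Δ_{j_t}) + 2·β(i_t, j_t)) + β(i_t, j_t). -/
open Matrix

/-- Bound on the stopping index `B` of (Dist)LinGapE under the good event
(Lemma 3 of the paper, after Xu et al.). -/
theorem stopping_index_bound (d K : ℕ) (hK : 2 ≤ K)
    (x : Fin K → (Fin d → ℝ)) (θstar θhat : Fin d → ℝ)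
    (Δ Δhat : Fin K → Fin K → ℝ)
    (hΔ : ∀ i j, Δ i j = (x i - x j) ⬝ᵥ θstar)
    (hΔhat : ∀ i j, Δhat i j = (x i - x j) ⬝ᵥ θhat)
    (astar : Fin K) (hastar : ∀ a, x a ⬝ᵥ θstar ≤ x astar ⬝ᵥ θstar)
    (gap : Fin K → ℝ) (hgap : ∀ i, gap i = (x astar - x i) ⬝ᵥ θstar)
    (β : Fin K → Fin K → ℝ)
    (hβsymm : ∀ i j, β i j = β j i) (hβnonneg : ∀ i j, 0 ≤ β i j)
    (hβdiag : ∀ i, β i i = 0)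
    (hgood : ∀ i j, |Δ i j - Δhat i j| ≤ β i j)
    (it : Fin K) (hit : ∀ i, x i ⬝ᵥ θhat ≤ x it ⬝ᵥ θhat)
    (jt : Fin K) (hjt : ∀ j, Δhat j it + β j it ≤ Δhat jt it + β jt it)
    (B : ℝ) (hB : B = Δhat jt it + β jt it) :
    (it = astar ∨ jt = astar →
      B ≤ min 0 (-(max (gap it) (gap jt)) + β it jt) + β it jt) ∧
    (it ≠ astar ∧ jt ≠ astar →
      B ≤ min 0 (-(max (gap it) (gap jt)) + 2 * β it jt) + β it jt) := by

  have hdot : ∀ (i j : Fin K) (θ : Fin d → ℝ),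
      (x i - x j) ⬝ᵥ θ = x i ⬝ᵥ θ - x j ⬝ᵥ θ :=
    fun i j θ => sub_dotProduct _ _ _
  have hβ := hβnonneg it jt
  have hsym := hβsymm jt it
  have ha : B ≤ β it jt := by
    have h0 : Δhat jt it ≤ 0 := by rw [hΔhat, hdot]; linarith [hit jt]
    rw [hB]; linarith
  have hb : gap it ≤ B := by
    have h1 := hjt astar
    have h2 := (abs_le.mp (hgood astar it)).2
    have h3 : Δ astar it = gap it := by rw [hΔ, hgap]
    rw [hB]; linarith
  have hΔji : Δ jt it = gap it - gap jt := by
    rw [hΔ, hgap, hgap, hdot, hdot, hdot]; ring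
  have hc : B ≤ gap it - gap jt + 2 * β it jt := by
    have h2 := (abs_le.mp (hgood jt it)).1
    rw [hB]; linarith
  have hg0 : gap astar = 0 := by rw [hgap]; simp
  have hmin : ∀ (m c : ℝ), B - c ≤ 0 → B - c ≤ m → B ≤ min 0 m + c := by
    intro m c h1 h2
    have := le_min h1 h2
    linarith
  constructor
  · rintro (h | h)
    · have hgit : gap it = 0 := by rw [h, hg0]
      refine hmin _ _ (by linarith) ?_
      rcases le_total (gap it) (gap jt) with hle | hle
      · rw [max_eq_right hle]; linarith
      · rw [max_eq_left hle]; linarith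
    · have hgjt : gap jt = 0 := by rw [h, hg0]
      refine hmin _ _ (by linarith) ?_
      rcases le_total (gap it) (gap jt) with hle | hle
      · rw [max_eq_right hle]; linarith
      · rw [max_eq_left hle]; linarith
  · intro _
    refine hmin _ _ (by linarith) ?_
    rcases le_total (gap it) (gap jt) with hle | hle
    · rw [max_eq_right hle]; linarith
    · rw [max_eq_left hle]; linarith
end

section
/- Let x_1, …, x_K ∈ ℝ^d with K ≥ 1, and let θ*, θ̂ ∈ ℝ^d. For i, j ∈ {1, …, K}, define Δ(i,j) = (x_i − x_j)ᵀθ* and Δ̂(i,j) = (x_i − x_j)ᵀθ̂, and let β : {1,…,K} × {1,…,K} → ℝ be nonnegative. Assume |Δ(i,j) − Δ̂(i,j)| ≤ β(i,j) for all i, j. Let â ∈ {1, …, K} be a maximizer of i ↦ x_iᵀθ̂, and let ε ≥ 0. If max_{j ∈ {1,…,K}} ( Δ̂(j, â) + β(j, â) ) ≤ ε, then for every a* ∈ {1, …, K} maximizing a ↦ x_aᵀθ*, we have (x_{a*} − x_{â})ᵀθ* ≤ ε. -/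
open Matrix

/-- Deterministic core of Theorem 1: if the good event holds and the stopping
condition `max_j (Δ̂(j, â) + β(j, â)) ≤ ε` is met, the recommended arm `â`
is `ε`-optimal. -/
theorem recommended_arm_eps_optimal (d K : ℕ) (hK : 1 ≤ K)
    (x : Fin K → (Fin d → ℝ)) (θstar θhat : Fin d → ℝ)
    (Δ Δhat : Fin K → Fin K → ℝ)
    (hΔ : ∀ i j, Δ i j = (x i - x j) ⬝ᵥ θstar)
    (hΔhat : ∀ i j, Δhat i j = (x i - x j) ⬝ᵥ θhat)
    (β : Fin K → Fin K → ℝ) (hβnonneg : ∀ i j, 0 ≤ β i j)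
    (hgood : ∀ i j, |Δ i j - Δhat i j| ≤ β i j)
    (ahat : Fin K) (hahat : ∀ i, x i ⬝ᵥ θhat ≤ x ahat ⬝ᵥ θhat)
    (ε : ℝ) (hε : 0 ≤ ε)
    (hstop : ∀ j, Δhat j ahat + β j ahat ≤ ε) :
    ∀ astar : Fin K, (∀ a, x a ⬝ᵥ θstar ≤ x astar ⬝ᵥ θstar) →
      (x astar - x ahat) ⬝ᵥ θstar ≤ ε := by
  intro astar _
  have h := abs_le.mp (hgood astar ahat)
  have := hstop astar
  rw [← hΔ astar ahat]
  linarith [h.2]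
end
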